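/- The marginal population estimand with a constant numerator probability equals the availability-weighted average of the per-occasion treatment effects: suppose p̃ₜ ≡ ρ for a constant ρ ∈ (ε, 1−ε) and fₜ ≡ 1 for all t, and suppose Σ_{t=1}^{T} E[Iₜ] > 0. Then for any bounded ℋₜ-measurable working models gₜ, a real number β solves Σ_{t=1}^{T} E[Iₜ·Wₜ·(Aₜ − ρ)·(Yₜ − gₜ − (Aₜ − ρ)·β)] = 0 if and only if β = ( Σ_{t=1}^{T} E[Iₜ·(μ₁ₜ − μ₀ₜ)] ) / ( Σ_{t=1}^{T} E[Iₜ] ). -/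

import Mathlib

open MeasureTheory ProbabilityTheory

private lemma integrable_of_bdd {Ω : Type*} {m : MeasurableSpace Ω} {P : Measure Ω}
    [IsProbabilityMeasure P] {f : Ω → ℝ} {C : ℝ} (hf : AEStronglyMeasurable f P)
    (h : ∀ᵐ ω ∂P, |f ω| ≤ C) : Integrable f P :=
  Integrable.mono' (integrable_const C) hf (by simpa [Real.norm_eq_abs] using h)

/-- key: integral of (bounded ℋ-measurable) × integrable equals integral against condexp. -/
private lemma integral_mul_condexp {Ω : Type*} {m : MeasurableSpace Ω} {P : Measure Ω}
    [IsProbabilityMeasure P] {ℋ : MeasurableSpace Ω} (hm : ℋ ≤ m) {h f : Ω → ℝ}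
    (hh : Measurable[ℋ] h) {C : ℝ} (hbdd : ∀ᵐ ω ∂P, |h ω| ≤ C) (hf : Integrable f P) :
    ∫ ω, h ω * f ω ∂P = ∫ ω, h ω * (P[f|ℋ]) ω ∂P := by
  have hhm : AEStronglyMeasurable[m] h P := (hh.mono hm le_rfl).aestronglyMeasurable
  have hfg : Integrable (h * f) P := by
    exact hf.bdd_mul hhm (by simpa [Real.norm_eq_abs] using hbdd)
  have hmul := condExp_mul_of_stronglyMeasurable_left hh.stronglyMeasurable hfg hf
  calc ∫ ω, h ω * f ω ∂P = ∫ ω, (h * f) ω ∂P := rfl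
    _ = ∫ ω, (P[h * f|ℋ]) ω ∂P := (integral_condExp hm).symm
    _ = ∫ ω, h ω * (P[f|ℋ]) ω ∂P := integral_congr_ae hmul

private lemma per_occasion {Ω : Type*} {m : MeasurableSpace Ω} {P : Measure Ω}
    [IsProbabilityMeasure P] {ℋ : MeasurableSpace Ω} (hH : ℋ ≤ m)
    {A Y I p W μ₁ μ₀ g : Ω → ℝ} {ε ρ β C : ℝ}
    (hA_meas : Measurable[m] A) (hA01 : ∀ ω, A ω = 0 ∨ A ω = 1)
    (hY : Integrable Y P)
    (hI_meas : Measurable[ℋ] I) (hI01 : ∀ ω, I ω = 0 ∨ I ω = 1)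
    (hε : 0 < ε)
    (hp_meas : Measurable[ℋ] p)
    (hp_bdd : ∀ᵐ ω ∂P, ε ≤ p ω ∧ p ω ≤ 1 - ε)
    (hp_ce : p =ᵐ[P] P[A|ℋ])
    (hW : ∀ ω, W ω = A ω * (ρ / p ω) + (1 - A ω) * ((1 - ρ) / (1 - p ω)))
    (hμ₁ : ∀ ω, μ₁ ω = (P[(fun ω' => A ω' * Y ω')|ℋ]) ω / p ω)
    (hμ₀ : ∀ ω, μ₀ ω = (P[(fun ω' => (1 - A ω') * Y ω')|ℋ]) ω / (1 - p ω))
    (hg_meas : Measurable[ℋ] g) (hg_bdd : ∀ ω, |g ω| ≤ C) :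
    Integrable (fun ω => I ω * W ω * (A ω - ρ) * (Y ω - g ω - (A ω - ρ) * β)) P ∧
    ∫ ω, I ω * W ω * (A ω - ρ) * (Y ω - g ω - (A ω - ρ) * β) ∂P
      = ρ * (1 - ρ) * ((∫ ω, I ω * (μ₁ ω - μ₀ ω) ∂P) - β * ∫ ω, I ω ∂P) := by
  have hI1 : ∀ ω, |I ω| ≤ 1 := by
    intro ω; rcases hI01 ω with h | h <;> simp [h]
  have hA1 : ∀ ω, |A ω| ≤ 1 := by
    intro ω; rcases hA01 ω with h | h <;> simp [h]
  have hA1' : ∀ ω, |1 - A ω| ≤ 1 := by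
    intro ω; rcases hA01 ω with h | h <;> simp [h]
  -- auxiliary functions
  set h1 : Ω → ℝ := fun ω => I ω / p ω with hh1
  set h2 : Ω → ℝ := fun ω => I ω * g ω / p ω with hh2
  set h3 : Ω → ℝ := fun ω => I ω / (1 - p ω) with hh3
  set h4 : Ω → ℝ := fun ω => I ω * g ω / (1 - p ω) with hh4
  have h1_meas : Measurable[ℋ] h1 := hI_meas.div hp_meas
  have h2_meas : Measurable[ℋ] h2 := (hI_meas.mul hg_meas).div hp_meas
  have h3_meas : Measurable[ℋ] h3 := hI_meas.div (measurable_const.sub hp_meas)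
  have h4_meas : Measurable[ℋ] h4 := (hI_meas.mul hg_meas).div (measurable_const.sub hp_meas)
  have hb1 : ∀ᵐ ω ∂P, |h1 ω| ≤ 1 / ε := by
    filter_upwards [hp_bdd] with ω hp
    rw [hh1, abs_div]
    exact div_le_div₀ zero_le_one (hI1 ω) hε (le_trans hp.1 (le_abs_self _))
  have hb2 : ∀ᵐ ω ∂P, |h2 ω| ≤ |C| / ε := by
    filter_upwards [hp_bdd] with ω hp
    rw [hh2, abs_div, abs_mul]
    refine div_le_div₀ (abs_nonneg C) ?_ hε (le_trans hp.1 (le_abs_self _))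
    calc |I ω| * |g ω| ≤ 1 * |C| := by
          exact mul_le_mul (hI1 ω) (le_trans (hg_bdd ω) (le_abs_self C)) (abs_nonneg _)
            zero_le_one
      _ = |C| := one_mul _
  have hp1 : ∀ᵐ ω ∂P, ε ≤ 1 - p ω := by
    filter_upwards [hp_bdd] with ω hp; linarith [hp.2]
  have hb3 : ∀ᵐ ω ∂P, |h3 ω| ≤ 1 / ε := by
    filter_upwards [hp1] with ω hp
    rw [hh3, abs_div]
    exact div_le_div₀ zero_le_one (hI1 ω) hε (le_trans hp (le_abs_self _))
  have hb4 : ∀ᵐ ω ∂P, |h4 ω| ≤ |C| / ε := by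
    filter_upwards [hp1] with ω hp
    rw [hh4, abs_div, abs_mul]
    refine div_le_div₀ (abs_nonneg C) ?_ hε (le_trans hp (le_abs_self _))
    calc |I ω| * |g ω| ≤ 1 * |C| := by
          exact mul_le_mul (hI1 ω) (le_trans (hg_bdd ω) (le_abs_self C)) (abs_nonneg _)
            zero_le_one
      _ = |C| := one_mul _
  -- integrability of base functions
  have hA_int : Integrable A P :=
    integrable_of_bdd hA_meas.aestronglyMeasurable (Filter.Eventually.of_forall hA1)
  have hA_int' : Integrable (fun ω => 1 - A ω) P := (integrable_const 1).sub hA_int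
  have hf1_int : Integrable (fun ω => A ω * Y ω) P :=
    hY.bdd_mul hA_meas.aestronglyMeasurable
      (Filter.Eventually.of_forall (by simpa [Real.norm_eq_abs] using hA1))
  have hf0_int : Integrable (fun ω => (1 - A ω) * Y ω) P :=
    hY.bdd_mul (measurable_const.sub hA_meas).aestronglyMeasurable
      (Filter.Eventually.of_forall (by simpa [Real.norm_eq_abs] using hA1'))
  have h1sm : AEStronglyMeasurable[m] h1 P := ((h1_meas.mono hH le_rfl)).aestronglyMeasurable
  have h2sm : AEStronglyMeasurable[m] h2 P := ((h2_meas.mono hH le_rfl)).aestronglyMeasurable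
  have h3sm : AEStronglyMeasurable[m] h3 P := ((h3_meas.mono hH le_rfl)).aestronglyMeasurable
  have h4sm : AEStronglyMeasurable[m] h4 P := ((h4_meas.mono hH le_rfl)).aestronglyMeasurable
  have nb1 : ∀ᵐ ω ∂P, ‖h1 ω‖ ≤ 1 / ε := by simpa [Real.norm_eq_abs] using hb1
  have nb2 : ∀ᵐ ω ∂P, ‖h2 ω‖ ≤ |C| / ε := by simpa [Real.norm_eq_abs] using hb2
  have nb3 : ∀ᵐ ω ∂P, ‖h3 ω‖ ≤ 1 / ε := by simpa [Real.norm_eq_abs] using hb3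
  have nb4 : ∀ᵐ ω ∂P, ‖h4 ω‖ ≤ |C| / ε := by simpa [Real.norm_eq_abs] using hb4
  -- six summand integrability
  have s1_int : Integrable (fun ω => h1 ω * (A ω * Y ω)) P := hf1_int.bdd_mul h1sm nb1
  have s2_int : Integrable (fun ω => h2 ω * A ω) P := hA_int.bdd_mul h2sm nb2
  have s3_int : Integrable (fun ω => h3 ω * ((1 - A ω) * Y ω)) P := hf0_int.bdd_mul h3sm nb3
  have s4_int : Integrable (fun ω => h4 ω * (1 - A ω)) P := hA_int'.bdd_mul h4sm nb4
  have s5_int : Integrable (fun ω => h1 ω * A ω) P := hA_int.bdd_mul h1sm nb1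
  have s6_int : Integrable (fun ω => h3 ω * (1 - A ω)) P := hA_int'.bdd_mul h3sm nb3
  -- pointwise identity a.e.
  have hpt : ∀ᵐ ω ∂P, I ω * W ω * (A ω - ρ) * (Y ω - g ω - (A ω - ρ) * β)
      = ρ * (1 - ρ) * (h1 ω * (A ω * Y ω) - h2 ω * A ω - h3 ω * ((1 - A ω) * Y ω)
        + h4 ω * (1 - A ω) - β * (1 - ρ) * (h1 ω * A ω) - β * ρ * (h3 ω * (1 - A ω))) := by
    filter_upwards [hp_bdd] with ω hp
    have hp0 : p ω ≠ 0 := by linarith [hp.1]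
    have hp1' : 1 - p ω ≠ 0 := by
      have : p ω < 1 := by linarith [hp.2]
      linarith
    rw [hh1, hh2, hh3, hh4, hW ω]
    rcases hA01 ω with h | h <;> rw [h] <;> field_simp <;> ring
  -- combination integrable
  have comb_int : Integrable (fun ω => ρ * (1 - ρ) * (h1 ω * (A ω * Y ω) - h2 ω * A ω
      - h3 ω * ((1 - A ω) * Y ω) + h4 ω * (1 - A ω) - β * (1 - ρ) * (h1 ω * A ω)
      - β * ρ * (h3 ω * (1 - A ω)))) P :=
    (((((s1_int.sub s2_int).sub s3_int).add s4_int).sub (s5_int.const_mul _)).sub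
      (s6_int.const_mul _)).const_mul _
  have main_int : Integrable (fun ω => I ω * W ω * (A ω - ρ) * (Y ω - g ω - (A ω - ρ) * β)) P :=
    comb_int.congr (hpt.mono fun ω h => h.symm)
  refine ⟨main_int, ?_⟩
  -- compute integrals of the six pieces
  have T1 : ∫ ω, h1 ω * (A ω * Y ω) ∂P = ∫ ω, I ω * μ₁ ω ∂P := by
    rw [integral_mul_condexp hH h1_meas hb1 hf1_int]
    refine integral_congr_ae (Filter.Eventually.of_forall fun ω => ?_)
    dsimp only
    rw [hμ₁ ω, hh1]; ring
  have T3 : ∫ ω, h3 ω * ((1 - A ω) * Y ω) ∂P = ∫ ω, I ω * μ₀ ω ∂P := by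
    rw [integral_mul_condexp hH h3_meas hb3 hf0_int]
    refine integral_congr_ae (Filter.Eventually.of_forall fun ω => ?_)
    dsimp only
    rw [hμ₀ ω, hh3]; ring
  -- for pieces involving A alone: condexp of A is p
  have hA_vs_p : ∀ (h : Ω → ℝ), Measurable[ℋ] h → ∀ {D : ℝ}, (∀ᵐ ω ∂P, |h ω| ≤ D) →
      ∫ ω, h ω * A ω ∂P = ∫ ω, h ω * p ω ∂P := by
    intro h hm' D hb
    rw [integral_mul_condexp hH hm' hb hA_int]
    refine integral_congr_ae ?_
    filter_upwards [hp_ce] with ω hω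
    rw [hω]
  have T2 : ∫ ω, h2 ω * A ω ∂P = ∫ ω, I ω * g ω ∂P := by
    rw [hA_vs_p h2 h2_meas hb2]
    refine integral_congr_ae ?_
    filter_upwards [hp_bdd] with ω hp
    have hp0 : p ω ≠ 0 := by linarith [hp.1]
    rw [hh2]; field_simp
  have T5 : ∫ ω, h1 ω * A ω ∂P = ∫ ω, I ω ∂P := by
    rw [hA_vs_p h1 h1_meas hb1]
    refine integral_congr_ae ?_
    filter_upwards [hp_bdd] with ω hp
    have hp0 : p ω ≠ 0 := by linarith [hp.1]
    rw [hh1]; field_simp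
  -- pieces with (1 - A): use subtraction
  have h2_int : Integrable h2 P := integrable_of_bdd h2sm hb2
  have h4_int : Integrable h4 P := integrable_of_bdd h4sm hb4
  have h1_int : Integrable h1 P := integrable_of_bdd h1sm hb1
  have h3_int : Integrable h3 P := integrable_of_bdd h3sm hb3
  have hsub : ∀ (h : Ω → ℝ), Integrable h P → Integrable (fun ω => h ω * A ω) P →
      ∫ ω, h ω * (1 - A ω) ∂P = ∫ ω, h ω ∂P - ∫ ω, h ω * A ω ∂P := by
    intro h hint hintA
    have : (fun ω => h ω * (1 - A ω)) = fun ω => h ω - h ω * A ω := by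
      funext ω; ring
    rw [this, integral_sub hint hintA]
  have T4 : ∫ ω, h4 ω * (1 - A ω) ∂P = ∫ ω, I ω * g ω ∂P := by
    have hA4 : ∫ ω, h4 ω * A ω ∂P = ∫ ω, h4 ω * p ω ∂P := hA_vs_p h4 h4_meas hb4
    rw [hsub h4 h4_int (hA_int.bdd_mul h4sm nb4), hA4,
      ← integral_sub h4_int (by
        refine integrable_of_bdd ((((h4_meas.mul hp_meas)).mono hH le_rfl)).aestronglyMeasurable
          (C := (|C| / ε) * 1) ?_
        filter_upwards [hb4, hp_bdd] with ω h4b hp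
        rw [abs_mul]
        refine mul_le_mul h4b ?_ (abs_nonneg _) (div_nonneg (abs_nonneg _) hε.le)
        rw [abs_le]; constructor <;> [linarith [hp.1]; linarith [hp.2, hε]])]
    refine integral_congr_ae ?_
    filter_upwards [hp_bdd] with ω hp
    have hp1' : 1 - p ω ≠ 0 := by
      have : p ω < 1 := by linarith [hp.2]; 
      linarith
    rw [hh4]; field_simp
  have T6 : ∫ ω, h3 ω * (1 - A ω) ∂P = ∫ ω, I ω ∂P := by
    have hA3 : ∫ ω, h3 ω * A ω ∂P = ∫ ω, h3 ω * p ω ∂P := hA_vs_p h3 h3_meas hb3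
    rw [hsub h3 h3_int (hA_int.bdd_mul h3sm nb3), hA3,
      ← integral_sub h3_int (by
        refine integrable_of_bdd ((((h3_meas.mul hp_meas)).mono hH le_rfl)).aestronglyMeasurable
          (C := (1 / ε) * 1) ?_
        filter_upwards [hb3, hp_bdd] with ω h3b hp
        rw [abs_mul]
        refine mul_le_mul h3b ?_ (abs_nonneg _) (div_nonneg zero_le_one hε.le)
        rw [abs_le]; constructor <;> [linarith [hp.1]; linarith [hp.2, hε]])]
    refine integral_congr_ae ?_
    filter_upwards [hp_bdd] with ω hp
    have hp1' : 1 - p ω ≠ 0 := by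
      have : p ω < 1 := by linarith [hp.2]
      linarith
    rw [hh3]; field_simp
  -- integrability of I·μ₁, I·μ₀
  have hIμ₁_eq : (fun ω => I ω * μ₁ ω) = fun ω => h1 ω * (P[(fun ω' => A ω' * Y ω')|ℋ]) ω := by
    funext ω; rw [hμ₁ ω, hh1]; ring
  have hIμ₀_eq : (fun ω => I ω * μ₀ ω) = fun ω => h3 ω * (P[(fun ω' => (1 - A ω') * Y ω')|ℋ]) ω := by
    funext ω; rw [hμ₀ ω, hh3]; ring
  have hIμ₁_int : Integrable (fun ω => I ω * μ₁ ω) P := by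
    rw [hIμ₁_eq]; exact integrable_condExp.bdd_mul h1sm nb1
  have hIμ₀_int : Integrable (fun ω => I ω * μ₀ ω) P := by
    rw [hIμ₀_eq]; exact integrable_condExp.bdd_mul h3sm nb3
  have hIdiff : ∫ ω, I ω * (μ₁ ω - μ₀ ω) ∂P = (∫ ω, I ω * μ₁ ω ∂P) - ∫ ω, I ω * μ₀ ω ∂P := by
    rw [← integral_sub hIμ₁_int hIμ₀_int]
    refine integral_congr_ae (Filter.Eventually.of_forall fun ω => ?_)
    ring
  -- final computation
  have i12 : Integrable (fun ω => h1 ω * (A ω * Y ω) - h2 ω * A ω) P := s1_int.sub s2_int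
  have i13 : Integrable (fun ω => h1 ω * (A ω * Y ω) - h2 ω * A ω
      - h3 ω * ((1 - A ω) * Y ω)) P := i12.sub s3_int
  have i14 : Integrable (fun ω => h1 ω * (A ω * Y ω) - h2 ω * A ω
      - h3 ω * ((1 - A ω) * Y ω) + h4 ω * (1 - A ω)) P := i13.add s4_int
  have i5 : Integrable (fun ω => β * (1 - ρ) * (h1 ω * A ω)) P := s5_int.const_mul _
  have i6 : Integrable (fun ω => β * ρ * (h3 ω * (1 - A ω))) P := s6_int.const_mul _
  have i15 : Integrable (fun ω => h1 ω * (A ω * Y ω) - h2 ω * A ω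
      - h3 ω * ((1 - A ω) * Y ω) + h4 ω * (1 - A ω) - β * (1 - ρ) * (h1 ω * A ω)) P :=
    i14.sub i5
  rw [integral_congr_ae hpt, integral_const_mul _ _,
    integral_sub i15 i6, integral_sub i14 i5, integral_add i13 s4_int,
    integral_sub i12 s3_int, integral_sub s1_int s2_int,
    integral_const_mul _ _, integral_const_mul _ _, T1, T2, T3, T4, T5, T6, hIdiff]
  ring

theorem marginal_estimand_availability_weighted_average
    {Ω : Type*} {m : MeasurableSpace Ω} {P : Measure Ω} [IsProbabilityMeasure P]
    (T : ℕ) (hT : 0 < T)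
    (ℋ : Fin T → MeasurableSpace Ω) (hHm : ∀ t, ℋ t ≤ m)
    (A : Fin T → Ω → ℝ) (hA_meas : ∀ t, Measurable (A t))
    (hA01 : ∀ t ω, A t ω = 0 ∨ A t ω = 1)
    (Y : Fin T → Ω → ℝ) (hY_int : ∀ t, Integrable (Y t) P)
    (I : Fin T → Ω → ℝ) (hI_meas : ∀ t, Measurable[ℋ t] (I t))
    (hI01 : ∀ t ω, I t ω = 0 ∨ I t ω = 1)
    (ε : ℝ) (hε_pos : 0 < ε) (hε_lt : ε < 1 / 2)
    (p : Fin T → Ω → ℝ) (hp_meas : ∀ t, Measurable[ℋ t] (p t))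
    (hp_bdd : ∀ t, ∀ᵐ ω ∂P, ε ≤ p t ω ∧ p t ω ≤ 1 - ε)
    (hp_ce : ∀ t, p t =ᵐ[P] P[A t|ℋ t])
    (ρ : ℝ) (hρ : ε < ρ ∧ ρ < 1 - ε)
    (W : Fin T → Ω → ℝ)
    (hW : ∀ t ω, W t ω = A t ω * (ρ / p t ω) + (1 - A t ω) * ((1 - ρ) / (1 - p t ω)))
    (μ₁ μ₀ : Fin T → Ω → ℝ)
    (hμ₁ : ∀ t ω, μ₁ t ω = (P[(fun ω' => A t ω' * Y t ω')|ℋ t]) ω / p t ω)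
    (hμ₀ : ∀ t ω, μ₀ t ω = (P[(fun ω' => (1 - A t ω') * Y t ω')|ℋ t]) ω / (1 - p t ω))
    (h_avail_pos : 0 < ∑ t, ∫ ω, I t ω ∂P) :
    ∀ g : Fin T → Ω → ℝ, (∀ t, Measurable[ℋ t] (g t)) →
      (∃ C : ℝ, ∀ t ω, |g t ω| ≤ C) →
      ∀ β : ℝ,
        (∫ ω, (∑ t, I t ω * W t ω * (A t ω - ρ)
            * (Y t ω - g t ω - (A t ω - ρ) * β)) ∂P = 0)
          ↔ β = (∑ t, ∫ ω, I t ω * (μ₁ t ω - μ₀ t ω) ∂P) / (∑ t, ∫ ω, I t ω ∂P) := by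
  intro g hg_meas hg_bdd β
  obtain ⟨C, hgC⟩ := hg_bdd
  have per : ∀ t : Fin T,
      Integrable (fun ω => I t ω * W t ω * (A t ω - ρ) * (Y t ω - g t ω - (A t ω - ρ) * β)) P ∧
      ∫ ω, I t ω * W t ω * (A t ω - ρ) * (Y t ω - g t ω - (A t ω - ρ) * β) ∂P
        = ρ * (1 - ρ) * ((∫ ω, I t ω * (μ₁ t ω - μ₀ t ω) ∂P) - β * ∫ ω, I t ω ∂P) :=
    fun t => per_occasion (hHm t) (hA_meas t) (hA01 t) (hY_int t) (hI_meas t) (hI01 t)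
      hε_pos (hp_meas t) (hp_bdd t) (hp_ce t) (hW t) (hμ₁ t) (hμ₀ t) (hg_meas t) (hgC t)
  set S1 := ∑ t, ∫ ω, I t ω * (μ₁ t ω - μ₀ t ω) ∂P with hS1
  set S0 := ∑ t, ∫ ω, I t ω ∂P with hS0
  have hLHS : ∫ ω, (∑ t, I t ω * W t ω * (A t ω - ρ)
      * (Y t ω - g t ω - (A t ω - ρ) * β)) ∂P = ρ * (1 - ρ) * (S1 - β * S0) := by
    rw [integral_finset_sum _ (fun t _ => (per t).1)]
    have : ∀ t : Fin T, ∫ ω, I t ω * W t ω * (A t ω - ρ) * (Y t ω - g t ω - (A t ω - ρ) * β) ∂P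
        = ρ * (1 - ρ) * ((∫ ω, I t ω * (μ₁ t ω - μ₀ t ω) ∂P) - β * ∫ ω, I t ω ∂P) :=
      fun t => (per t).2
    rw [Finset.sum_congr rfl (fun t _ => this t), ← Finset.mul_sum, Finset.sum_sub_distrib,
      ← Finset.mul_sum]
  have hρpos : 0 < ρ := lt_trans hε_pos hρ.1
  have h1ρpos : 0 < 1 - ρ := lt_of_lt_of_le hε_pos (by linarith [hρ.2])
  have hprod : ρ * (1 - ρ) ≠ 0 := ne_of_gt (mul_pos hρpos h1ρpos)
  rw [hLHS]
  constructor
  · intro h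
    have h' : S1 - β * S0 = 0 := by
      rcases mul_eq_zero.1 h with h | h
      · exact absurd h hprod
      · exact h
    rw [eq_div_iff (ne_of_gt h_avail_pos)]
    linarith
  · intro h
    rw [h, div_mul_eq_mul_div, mul_div_assoc, div_self (ne_of_gt h_avail_pos)]
    ring
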